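/- If R is a completion-optimal repair of a prioritized knowledge base, then R is a Pareto-optimal repair. -/
import Mathlib


variable {F : Type*}

/-- A set is consistent w.r.t. a family of conflicts if it includes no conflict. -/
def Consistent (Conf : Set (Set F)) (S : Set F) : Prop := ∀ C ∈ Conf, ¬ C ⊆ S

/-- A repair: an inclusion-maximal consistent subset of the dataset `D`. -/
def IsRepair (D : Set F) (Conf : Set (Set F)) (R : Set F) : Prop :=
  R ⊆ D ∧ Consistent Conf R ∧ ∀ S, S ⊆ D → Consistent Conf S → R ⊆ S → S = R

/-- A relation is acyclic if it admits no directed cycle. -/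
def Acyclic (r : F → F → Prop) : Prop := ∀ a, ¬ Relation.TransGen r a a

/-- A priority relation: acyclic, relating only facts co-occurring in some conflict. -/
def IsPriority (Conf : Set (Set F)) (p : F → F → Prop) : Prop :=
  Acyclic p ∧ ∀ a b, p a b → ∃ C ∈ Conf, a ∈ C ∧ b ∈ C

/-- A total priority relation compares every pair of distinct conflicting facts. -/
def IsTotalPriority (Conf : Set (Set F)) (p : F → F → Prop) : Prop :=
  IsPriority Conf p ∧
    ∀ a b, a ≠ b → (∃ C ∈ Conf, a ∈ C ∧ b ∈ C) → p a b ∨ p b a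

/-- A completion of `p` is a total priority relation extending `p`. -/
def IsCompletion (Conf : Set (Set F)) (p p' : F → F → Prop) : Prop :=
  IsTotalPriority Conf p' ∧ ∀ a b, p a b → p' a b

/-- A Pareto improvement of `R`: a consistent `B ⊆ D` containing some `β ∉ R`
with `β ≻ α` for every `α ∈ R \ B`. -/
def ParetoImprovement (D : Set F) (Conf : Set (Set F)) (p : F → F → Prop)
    (R B : Set F) : Prop :=
  B ⊆ D ∧ Consistent Conf B ∧ ∃ β ∈ B, β ∉ R ∧ ∀ α ∈ R, α ∉ B → p β α

/-- A Pareto-optimal repair: a repair with no Pareto improvement. -/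
def ParetoOptimal (D : Set F) (Conf : Set (Set F)) (p : F → F → Prop) (R : Set F) : Prop :=
  IsRepair D Conf R ∧ ¬ ∃ B, ParetoImprovement D Conf p R B

/-- A completion-optimal repair: Pareto-optimal for some completion of `p`. -/
def CompletionOptimal (D : Set F) (Conf : Set (Set F)) (p : F → F → Prop) (R : Set F) : Prop :=
  ∃ p', IsCompletion Conf p p' ∧ ParetoOptimal D Conf p' R

/-- If `R` is a completion-optimal repair of a prioritized knowledge base,
then `R` is a Pareto-optimal repair. -/
theorem completionOptimal_isParetoOptimal
    (D : Set F) (hD : D.Finite) (Conf : Set (Set F))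
    (p : F → F → Prop) (hp : IsPriority Conf p) (R : Set F)
    (h : CompletionOptimal D Conf p R) : ParetoOptimal D Conf p R := by
  obtain ⟨p', ⟨_, hext⟩, hrep, hno⟩ := h
  refine ⟨hrep, ?_⟩
  rintro ⟨B, hBD, hBc, β, hβB, hβR, hβp⟩
  exact hno ⟨B, hBD, hBc, β, hβB, hβR, fun α hα hαB => hext _ _ (hβp α hα hαB)⟩
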